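/- (Theorem 5.3, tuned learning rate) In the setting of the deterministic Online Mirror Descent theorem — an episodic loop-free MDP with triple set J = ⋃_{k=0}^{L−1} X_k×A×X_{k+1}, |X| = Σ_{k=0}^{L}|X_k|, T ≥ 1, F > 0, uniform initial point q_1(x,a,x') = 1/(|X_k||A||X_{k+1}|), vectors z_t ∈ ℝ^J with ‖z_t‖_∞ ≤ F, convex sets K_t contained in { q ∈ [0,1]^J : every layer-block of q sums to 1 }, and q_{t+1} ∈ K_t componentwise positive minimizing q ↦ η⟨q,z_t⟩ + D(q‖q_t) over K_t — assume additionally L² < |X|²|A| and set η = √( ln(|X|²|A|/L²) / (F²T) ). Then for every q ∈ ⋂_{t=1}^T K_t: Σ_{t=1}^T ⟨q_t − q, z_t⟩ ≤ 2FL·√( 2T·ln(|X||A|/L) ). -/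

import Mathlib

open Finset

/-- An episodic loop-free MDP: layers `X 0, …, X L` (encoded as an `ℕ`-indexed family of
types, so distinct layers are automatically disjoint), with `X 0` and `X L` singletons,
and a finite nonempty action set `A`. -/
structure LoopFreeMDP where
  L : ℕ
  hL : 1 ≤ L
  X : ℕ → Type
  instFintypeX : ∀ k, Fintype (X k)
  instDecEqX : ∀ k, DecidableEq (X k)
  nonemptyX : ∀ k, k ≤ L → Nonempty (X k)
  x0 : X 0
  hX0 : ∀ y : X 0, y = x0
  xL : X L
  hXL : ∀ y : X L, y = xL
  A : Type
  instFintypeA : Fintype A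
  instDecEqA : DecidableEq A
  instNonemptyA : Nonempty A

attribute [instance] LoopFreeMDP.instFintypeX LoopFreeMDP.instDecEqX
  LoopFreeMDP.instFintypeA LoopFreeMDP.instDecEqA LoopFreeMDP.instNonemptyA

namespace LoopFreeMDP

/-- The type of candidate transition functions. -/
abbrev TransKer (M : LoopFreeMDP) := ∀ k, M.X k → M.A → M.X (k + 1) → ℝ

/-- The type of candidate policies. -/
abbrev PolicyKer (M : LoopFreeMDP) := ∀ k, M.X k → M.A → ℝ

/-- `P` is a transition function: for every layer `k < L`, state and action,
`P (·|x,a)` is a probability vector on `X (k+1)`. -/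
def IsTransition (M : LoopFreeMDP) (P : M.TransKer) : Prop :=
  ∀ k, k < M.L → ∀ (x : M.X k) (a : M.A),
    (∀ x', 0 ≤ P k x a x') ∧ (∑ x', P k x a x' = 1)

/-- `π` is a policy: for every layer `k < L` and state, `π (·|x)` is a probability
vector on `A`. -/
def IsPolicy (M : LoopFreeMDP) (π : M.PolicyKer) : Prop :=
  ∀ k, k < M.L → ∀ x : M.X k,
    (∀ a, 0 ≤ π k x a) ∧ (∑ a, π k x a = 1)

/-- The state-visitation probabilities `μ_k`, defined layer by layer. -/
def mu (M : LoopFreeMDP) (P : M.TransKer) (π : M.PolicyKer) : ∀ k, M.X k → ℝ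
  | 0, _ => 1
  | k + 1, x' => ∑ x : M.X k, ∑ a : M.A, M.mu P π k x * π k x a * P k x a x'

/-- The occupancy measure `q^{P,π}(x,a,x') = μ_k(x)·π(a|x)·P(x'|x,a)`. -/
def occ (M : LoopFreeMDP) (P : M.TransKer) (π : M.PolicyKer)
    (k : ℕ) (x : M.X k) (a : M.A) (x' : M.X (k + 1)) : ℝ :=
  M.mu P π k x * π k x a * P k x a x'

end LoopFreeMDP

namespace LoopFreeMDP

/-- Standard inner product on `ℝ^J`, where `J = ⋃_{k<L} X_k×A×X_{k+1}` is the set of triples. -/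
def ip (M : LoopFreeMDP) (q w : ∀ k, M.X k → M.A → M.X (k + 1) → ℝ) : ℝ :=
  ∑ k ∈ Finset.range M.L, ∑ x : M.X k, ∑ a : M.A, ∑ x' : M.X (k + 1),
    q k x a x' * w k x a x'

/-- Unnormalized Kullback–Leibler divergence on `ℝ^J`,
`D(q‖q') = Σ_{j∈J} (q_j·ln(q_j/q'_j) − q_j + q'_j)` (with `0·ln 0 = 0`, which holds
automatically since `Real.log 0 = 0`). -/
noncomputable def kl (M : LoopFreeMDP) (q q' : ∀ k, M.X k → M.A → M.X (k + 1) → ℝ) : ℝ :=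
  ∑ k ∈ Finset.range M.L, ∑ x : M.X k, ∑ a : M.A, ∑ x' : M.X (k + 1),
    (q k x a x' * Real.log (q k x a x' / q' k x a x') - q k x a x' + q' k x a x')

/-- `|X| = Σ_{k=0}^{L} |X_k|`, the total number of states. -/
def cardX (M : LoopFreeMDP) : ℕ :=
  ∑ k ∈ Finset.range (M.L + 1), Fintype.card (M.X k)

end LoopFreeMDP

section OMDHelpers

open Filter Set

private lemma scalar_key (a b c : ℝ) (ha : 0 ≤ a) (hb : 0 < b) (hc : 0 ≤ c) :
    c * |a - b| ≤ (a * Real.log (a / b) - a + b) + c ^ 2 * (a + b) / 2 := by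
  set sa := Real.sqrt a with hsa
  set sb := Real.sqrt b with hsb
  have hsa0 : 0 ≤ sa := Real.sqrt_nonneg a
  have hsb0 : 0 < sb := Real.sqrt_pos.2 hb
  have hsa2 : sa ^ 2 = a := Real.sq_sqrt ha
  have hsb2 : sb ^ 2 = b := Real.sq_sqrt hb.le
  have hkl : (sa - sb) ^ 2 ≤ a * Real.log (a / b) - a + b := by
    rcases eq_or_lt_of_le ha with h0 | ha'
    · rw [← h0] at hsa2 ⊢
      have : sa = 0 := by nlinarith
      rw [this]
      simp
      nlinarith
    · have hsa' : 0 < sa := Real.sqrt_pos.2 ha'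
      have hlog : Real.log (sb / sa) ≤ sb / sa - 1 := Real.log_le_sub_one_of_pos (by positivity)
      have h1 : Real.log (a / b) = 2 * (Real.log sa - Real.log sb) := by
        rw [Real.log_div (ne_of_gt ha') (ne_of_gt hb), hsa, hsb, Real.log_sqrt ha,
          Real.log_sqrt hb.le]; ring
      have h2 : Real.log (sb / sa) = Real.log sb - Real.log sa :=
        Real.log_div (ne_of_gt hsb0) (ne_of_gt hsa')
      have h3 : 1 - sb / sa ≤ Real.log sa - Real.log sb := by linarith
      have h4 : a * (1 - sb / sa) = a - sa * sb := by
        field_simp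
        nlinarith [hsa2]
      nlinarith [mul_le_mul_of_nonneg_left h3 ha, hsa2, hsb2]
  have habs : |a - b| = |sa - sb| * (sa + sb) := by
    have h5 : a - b = (sa - sb) * (sa + sb) := by nlinarith [hsa2, hsb2]
    rw [h5, abs_mul, abs_of_nonneg (show (0:ℝ) ≤ sa + sb by positivity)]
  rw [habs]
  nlinarith [sq_nonneg (|sa - sb| - c * (sa + sb) / 2), sq_abs (sa - sb), sq_nonneg (sa - sb),
    sq_nonneg (sa + sb), hsa2, hsb2, sq_nonneg c, mul_nonneg hc (sq_nonneg (sa - sb))]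

private lemma klterm_nonneg (a b : ℝ) (ha : 0 ≤ a) (hb : 0 < b) :
    0 ≤ a * Real.log (a / b) - a + b := by
  have := scalar_key a b 0 ha hb le_rfl
  simpa using this

private lemma klterm_identity (p A B : ℝ) (hA : 0 < A) (hB : 0 < B) :
    (p - A) * Real.log (A / B)
      = (p * Real.log (p / B) - p + B) - (p * Real.log (p / A) - p + A)
        - (A * Real.log (A / B) - A + B) := by
  rcases eq_or_ne p 0 with rfl | hp
  · simp; ring
  · rw [Real.log_div hp (ne_of_gt hB), Real.log_div hp (ne_of_gt hA),
      Real.log_div (ne_of_gt hA) (ne_of_gt hB)]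
    ring

private lemma hasDerivAt_affine (A d : ℝ) : HasDerivAt (fun s : ℝ => A + s * d) d 0 := by
  simpa using ((hasDerivAt_id (0:ℝ)).mul_const d).const_add A

private lemma hasDerivAt_klterm (A d B : ℝ) (hA : 0 < A) (hB : 0 < B) :
    HasDerivAt (fun s : ℝ => (A + s * d) * Real.log ((A + s * d) / B) - (A + s * d) + B)
      (d * Real.log (A / B)) 0 := by
  have hl := hasDerivAt_affine A d
  have hg : HasDerivAt (fun x : ℝ => x * Real.log x - Real.log B * x)
      (Real.log A + 1 - Real.log B) A := by
    have h := (Real.hasDerivAt_mul_log (ne_of_gt hA)).sub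
      ((hasDerivAt_id A).const_mul (Real.log B))
    simp only [mul_one] at h
    exact h
  have hcomp : HasDerivAt ((fun x : ℝ => x * Real.log x - Real.log B * x) ∘
      (fun s : ℝ => A + s * d)) ((Real.log A + 1 - Real.log B) * d) 0 := by
    refine HasDerivAt.comp (0:ℝ) ?_ hl
    simpa using hg
  have hcomp2 : HasDerivAt (fun s : ℝ => (A + s * d) * Real.log (A + s * d)
      - Real.log B * (A + s * d)) ((Real.log A + 1 - Real.log B) * d) 0 := by
    exact hcomp
  have heq : (fun s : ℝ => (A + s * d) * Real.log ((A + s * d) / B) - (A + s * d) + B)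
      = fun s : ℝ => ((A + s * d) * Real.log (A + s * d) - Real.log B * (A + s * d))
        - (A + s * d) + B := by
    funext s
    rcases eq_or_ne (A + s * d) 0 with h | h
    · rw [h]; simp
    · rw [Real.log_div h (ne_of_gt hB)]; ring
  rw [heq]
  have := (hcomp2.sub hl).add_const B
  refine this.congr_deriv ?_
  rw [Real.log_div (ne_of_gt hA) (ne_of_gt hB)]
  ring

private lemma deriv_nonneg_of_right_min (f : ℝ → ℝ) (d : ℝ) (hd : HasDerivAt f d 0)
    (h : ∀ s ∈ Set.Ioo (0:ℝ) 1, f 0 ≤ f s) : 0 ≤ d := by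
  rw [hasDerivAt_iff_tendsto_slope] at hd
  have h2 : Tendsto (slope f 0) (nhdsWithin 0 (Set.Ioi 0)) (nhds d) :=
    hd.mono_left (nhdsWithin_mono _ (fun x hx => ne_of_gt hx))
  refine ge_of_tendsto h2 ?_
  filter_upwards [Ioo_mem_nhdsGT (by norm_num : (0:ℝ) < 1)] with s hs
  rw [slope_def_field]
  have h3 := h s hs
  have hs0 : (0:ℝ) < s := hs.1
  apply div_nonneg (by linarith) (by linarith)

private lemma ip_sub (M : LoopFreeMDP) (f g zz : ∀ k, M.X k → M.A → M.X (k + 1) → ℝ) :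
    M.ip (fun k x a x' => f k x a x' - g k x a x') zz = M.ip f zz - M.ip g zz := by
  simp only [LoopFreeMDP.ip, sub_mul, Finset.sum_sub_distrib]

end OMDHelpers
set_option maxHeartbeats 1000000 in

/-- **Theorem 5.3 (tuned learning rate).** In the setting of the deterministic Online Mirror
Descent theorem, if additionally `L² < |X|²|A|`, `F > 0`, and
`η = √(ln(|X|²|A|/L²)/(F²T))`, then for every comparator `q ∈ ⋂_t K_t`:
`Σ_{t=1}^T ⟨q_t − q, z_t⟩ ≤ 2FL·√(2T·ln(|X||A|/L))`.
(Indices are shifted: here `q t` denotes `q_{t+1}` of the paper, `t = 0,…,T`.) -/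
theorem omd_regret_tuned_eta (M : LoopFreeMDP) (T : ℕ) (hT : 1 ≤ T)
    (F : ℝ) (hF : 0 < F)
    (hL2 : M.L ^ 2 < M.cardX ^ 2 * Fintype.card M.A)
    (η : ℝ)
    (hη : η = Real.sqrt
      (Real.log ((M.cardX : ℝ) ^ 2 * (Fintype.card M.A : ℝ) / (M.L : ℝ) ^ 2) / (F ^ 2 * T)))
    (z : ℕ → ∀ k, M.X k → M.A → M.X (k + 1) → ℝ)
    (K : ℕ → Set (∀ k, M.X k → M.A → M.X (k + 1) → ℝ))
    (q : ℕ → ∀ k, M.X k → M.A → M.X (k + 1) → ℝ)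
    (hq1 : ∀ k < M.L, ∀ (x : M.X k) (a : M.A) (x' : M.X (k + 1)),
      q 0 k x a x' = 1 / ((Fintype.card (M.X k) : ℝ) * (Fintype.card M.A : ℝ) *
        (Fintype.card (M.X (k + 1)) : ℝ)))
    (hz : ∀ t < T, ∀ k < M.L, ∀ (x : M.X k) (a : M.A) (x' : M.X (k + 1)),
      |z t k x a x'| ≤ F)
    (hKsub : ∀ t < T, ∀ p ∈ K t,
      (∀ k < M.L, ∀ (x : M.X k) (a : M.A) (x' : M.X (k + 1)),
        0 ≤ p k x a x' ∧ p k x a x' ≤ 1) ∧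
      (∀ k < M.L, ∑ x : M.X k, ∑ a : M.A, ∑ x' : M.X (k + 1), p k x a x' = 1))
    (hKconv : ∀ t < T, Convex ℝ (K t))
    (hmem : ∀ t < T, q (t + 1) ∈ K t)
    (hpos : ∀ t < T, ∀ k < M.L, ∀ (x : M.X k) (a : M.A) (x' : M.X (k + 1)),
      0 < q (t + 1) k x a x')
    (hmin : ∀ t < T, ∀ p ∈ K t,
      η * M.ip (q (t + 1)) (z t) + M.kl (q (t + 1)) (q t)
        ≤ η * M.ip p (z t) + M.kl p (q t)) :
    ∀ qq, (∀ t < T, qq ∈ K t) →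
      ∑ t ∈ Finset.range T,
          M.ip (fun k x a x' => q t k x a x' - qq k x a x') (z t)
        ≤ 2 * F * M.L *
            Real.sqrt (2 * T *
              Real.log ((M.cardX : ℝ) * (Fintype.card M.A : ℝ) / (M.L : ℝ))) := by
  intro qq hqq
  classical
  set Xc : ℝ := (M.cardX : ℝ) with hXc
  set Ac : ℝ := (Fintype.card M.A : ℝ) with hAc
  set Lc : ℝ := (M.L : ℝ) with hLc
  set R : ℝ := Real.log (Xc ^ 2 * Ac / Lc ^ 2) with hR
  set S : ℝ := Real.log (Xc * Ac / Lc) with hS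
  have hT0 : (1:ℝ) ≤ (T:ℝ) := by exact_mod_cast hT
  have hcard : ∀ k, k ≤ M.L → 0 < (Fintype.card (M.X k) : ℝ) := fun k hk => by
    have : 0 < Fintype.card (M.X k) := @Fintype.card_pos _ _ (M.nonemptyX k hk)
    exact_mod_cast this
  have hAcard : (0:ℝ) < Ac := by
    have : 0 < Fintype.card M.A := Fintype.card_pos
    rw [hAc]; exact_mod_cast this
  have hAcard1 : (1:ℝ) ≤ Ac := by
    have : 0 < Fintype.card M.A := Fintype.card_pos
    rw [hAc]; exact_mod_cast this
  have hLpos : (0:ℝ) < Lc := by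
    rw [hLc]; exact_mod_cast Nat.lt_of_lt_of_le Nat.zero_lt_one M.hL
  have hXge : Lc + 1 ≤ Xc := by
    have h1 : M.L + 1 ≤ M.cardX := by
      unfold LoopFreeMDP.cardX
      calc M.L + 1 = ∑ _k ∈ Finset.range (M.L + 1), 1 := by simp
        _ ≤ ∑ k ∈ Finset.range (M.L + 1), Fintype.card (M.X k) := by
            apply Finset.sum_le_sum
            intro k hk
            exact @Fintype.card_pos _ _ (M.nonemptyX k (by simpa using Nat.lt_succ_iff.1 (Finset.mem_range.1 hk)))
    rw [hXc, hLc]; exact_mod_cast h1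
  have hXpos : (0:ℝ) < Xc := by linarith
  have hRpos : 0 < R := by
    rw [hR]
    apply Real.log_pos
    rw [lt_div_iff₀ (by positivity)]
    have : (M.L:ℝ) ^ 2 < (M.cardX:ℝ) ^ 2 * (Fintype.card M.A : ℝ) := by exact_mod_cast hL2
    rw [hXc, hAc, hLc]; linarith
  have hSpos : 0 < S := by
    rw [hS]
    apply Real.log_pos
    rw [lt_div_iff₀ hLpos]
    nlinarith
  have hRS : R ≤ 2 * S := by
    have h2S : 2 * S = Real.log ((Xc * Ac / Lc) ^ 2) := by
      rw [hS, Real.log_pow]; push_cast; ring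
    rw [h2S, hR]
    apply Real.log_le_log (by positivity)
    rw [div_pow, div_le_div_iff₀ (by positivity) (by positivity)]
    have key : 0 ≤ Xc ^ 2 * Ac * (Ac - 1) * Lc ^ 2 :=
      mul_nonneg (mul_nonneg (mul_nonneg (sq_nonneg Xc) hAcard.le) (by linarith)) (sq_nonneg Lc)
    nlinarith [key]
  have hηpos : 0 < η := by
    rw [hη]
    apply Real.sqrt_pos.2
    exact div_pos hRpos (by positivity)
  have hη2 : η ^ 2 = R / (F ^ 2 * T) := by
    rw [hη]
    exact Real.sq_sqrt (div_nonneg hRpos.le (by positivity))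
  have hqpos : ∀ t, t ≤ T → ∀ k, k < M.L → ∀ (x : M.X k) (a : M.A) (x' : M.X (k+1)),
      0 < q t k x a x' := by
    intro t ht k hk x a x'
    cases t with
    | zero =>
      rw [hq1 k hk]
      exact div_pos one_pos (mul_pos (mul_pos (hcard k hk.le) hAcard) (hcard (k+1) hk))
    | succ s => exact hpos s (by omega) k hk x a x'
  have hqmass : ∀ t, t ≤ T → ∀ k, k < M.L →
      ∑ x : M.X k, ∑ a : M.A, ∑ x' : M.X (k+1), q t k x a x' = 1 := by
    intro t ht k hk
    cases t with
    | zero =>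
      have h1 := (hcard k hk.le).ne'
      have h2 := (hcard (k+1) hk).ne'
      have h3 := hAcard.ne'
      simp only [hq1 k hk, Finset.sum_const, Finset.card_univ, nsmul_eq_mul]
      field_simp
      rw [hAc]
    | succ s => exact (hKsub s (by omega) _ (hmem s (by omega))).2 k hk
  have hmassL : ∀ t, t ≤ T →
      ∑ k ∈ Finset.range M.L, ∑ x : M.X k, ∑ a : M.A, ∑ x' : M.X (k+1), q t k x a x' = Lc := by
    intro t ht
    rw [Finset.sum_congr rfl (fun k hk => hqmass t ht k (Finset.mem_range.1 hk))]
    simp [hLc]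
  have hqq0 := (hKsub 0 (by omega) qq (hqq 0 (by omega))).1
  have hqqmass := (hKsub 0 (by omega) qq (hqq 0 (by omega))).2
  have hmain : ∀ t, t < T →
      η * (M.ip (q t) (z t) - M.ip qq (z t))
        ≤ M.kl qq (q t) - M.kl qq (q (t+1)) + η ^ 2 * F ^ 2 * Lc := by
    intro t ht
    have hApos := hqpos (t+1) (by omega)
    have hBpos := hqpos t (le_of_lt ht)
    have hopt : 0 ≤ η * (M.ip qq (z t) - M.ip (q (t+1)) (z t))
        + ∑ k ∈ Finset.range M.L, ∑ x : M.X k, ∑ a : M.A, ∑ x' : M.X (k+1),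
            (qq k x a x' - q (t+1) k x a x') * Real.log (q (t+1) k x a x' / q t k x a x') := by
      set Φ : ℝ → ℝ := fun s =>
        η * M.ip (fun k x a x' => q (t+1) k x a x'
            + s * (qq k x a x' - q (t+1) k x a x')) (z t)
          + M.kl (fun k x a x' => q (t+1) k x a x'
            + s * (qq k x a x' - q (t+1) k x a x')) (q t) with hPhi
      have hD : HasDerivAt Φ
          (η * (∑ k ∈ Finset.range M.L, ∑ x : M.X k, ∑ a : M.A, ∑ x' : M.X (k+1),
              (qq k x a x' - q (t+1) k x a x') * z t k x a x')
            + ∑ k ∈ Finset.range M.L, ∑ x : M.X k, ∑ a : M.A, ∑ x' : M.X (k+1),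
              (qq k x a x' - q (t+1) k x a x')
                * Real.log (q (t+1) k x a x' / q t k x a x')) 0 := by
        simp only [hPhi, LoopFreeMDP.ip, LoopFreeMDP.kl]
        apply HasDerivAt.add
        · apply HasDerivAt.const_mul
          apply HasDerivAt.fun_sum; intro k _
          apply HasDerivAt.fun_sum; intro x _
          apply HasDerivAt.fun_sum; intro a _
          apply HasDerivAt.fun_sum; intro x' _
          exact (hasDerivAt_affine _ _).mul_const _
        · apply HasDerivAt.fun_sum; intro k hk
          apply HasDerivAt.fun_sum; intro x _
          apply HasDerivAt.fun_sum; intro a _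
          apply HasDerivAt.fun_sum; intro x' _
          exact hasDerivAt_klterm _ _ _ (hApos k (Finset.mem_range.1 hk) x a x')
            (hBpos k (Finset.mem_range.1 hk) x a x')
      have hmin0 : ∀ s ∈ Set.Ioo (0:ℝ) 1, Φ 0 ≤ Φ s := by
        intro s hs
        have hmemc : s • qq + (1 - s) • q (t+1) ∈ K t :=
          hKconv t ht (hqq t ht) (hmem t ht) hs.1.le (by linarith [hs.2]) (by ring)
        have hc : (fun k x a x' => q (t+1) k x a x' + s * (qq k x a x' - q (t+1) k x a x'))
            = (s • qq + (1 - s) • q (t+1) : ∀ k, M.X k → M.A → M.X (k + 1) → ℝ) := by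
          funext k x a x'
          simp only [Pi.add_apply, Pi.smul_apply, smul_eq_mul]
          ring
        have h0 : Φ 0 = η * M.ip (q (t+1)) (z t) + M.kl (q (t+1)) (q t) := by
          simp only [hPhi, zero_mul, add_zero]
        have hsv : Φ s = η * M.ip (s • qq + (1 - s) • q (t+1)) (z t)
            + M.kl (s • qq + (1 - s) • q (t+1)) (q t) := by
          simp only [hPhi]
          rw [hc]
        rw [h0, hsv]
        exact hmin t ht _ hmemc
      have hkey := deriv_nonneg_of_right_min Φ _ hD hmin0
      have hipsub : (∑ k ∈ Finset.range M.L, ∑ x : M.X k, ∑ a : M.A, ∑ x' : M.X (k+1),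
            (qq k x a x' - q (t+1) k x a x') * z t k x a x')
          = M.ip qq (z t) - M.ip (q (t+1)) (z t) := by
        simp only [LoopFreeMDP.ip, sub_mul, Finset.sum_sub_distrib]
      rw [hipsub] at hkey
      exact hkey
    have hiden : ∑ k ∈ Finset.range M.L, ∑ x : M.X k, ∑ a : M.A, ∑ x' : M.X (k+1),
          (qq k x a x' - q (t+1) k x a x') * Real.log (q (t+1) k x a x' / q t k x a x')
        = M.kl qq (q t) - M.kl qq (q (t+1)) - M.kl (q (t+1)) (q t) := by
      have h2 : (∑ k ∈ Finset.range M.L, ∑ x : M.X k, ∑ a : M.A, ∑ x' : M.X (k+1),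
          ((qq k x a x' * Real.log (qq k x a x' / q t k x a x') - qq k x a x' + q t k x a x')
            - (qq k x a x' * Real.log (qq k x a x' / q (t+1) k x a x') - qq k x a x'
                + q (t+1) k x a x')
            - (q (t+1) k x a x' * Real.log (q (t+1) k x a x' / q t k x a x')
                - q (t+1) k x a x' + q t k x a x')))
          = M.kl qq (q t) - M.kl qq (q (t+1)) - M.kl (q (t+1)) (q t) := by
        simp only [LoopFreeMDP.kl, Finset.sum_sub_distrib]
      rw [← h2]
      refine Finset.sum_congr rfl fun k hk => Finset.sum_congr rfl fun x _ =>
        Finset.sum_congr rfl fun a _ => Finset.sum_congr rfl fun x' _ =>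
        klterm_identity _ _ _ (hApos k (Finset.mem_range.1 hk) x a x')
          (hBpos k (Finset.mem_range.1 hk) x a x')
    have hcost : η * (M.ip (q t) (z t) - M.ip (q (t+1)) (z t))
        ≤ M.kl (q (t+1)) (q t) + η ^ 2 * F ^ 2 * Lc := by
      have e1 : η * (M.ip (q t) (z t) - M.ip (q (t+1)) (z t))
          = ∑ k ∈ Finset.range M.L, ∑ x : M.X k, ∑ a : M.A, ∑ x' : M.X (k+1),
              η * (q t k x a x' * z t k x a x' - q (t+1) k x a x' * z t k x a x') := by
        simp only [LoopFreeMDP.ip, ← Finset.sum_sub_distrib, Finset.mul_sum]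
      have hmass2 : (∑ k ∈ Finset.range M.L, ∑ x : M.X k, ∑ a : M.A, ∑ x' : M.X (k+1),
            ((η * F) ^ 2 / 2 * q (t+1) k x a x' + (η * F) ^ 2 / 2 * q t k x a x'))
          = η ^ 2 * F ^ 2 * Lc := by
        have hA' := hmassL (t+1) (by omega)
        have hB' := hmassL t (le_of_lt ht)
        simp only [Finset.sum_add_distrib, ← Finset.mul_sum]
        rw [hA', hB']
        ring
      rw [e1]
      calc (∑ k ∈ Finset.range M.L, ∑ x : M.X k, ∑ a : M.A, ∑ x' : M.X (k+1),
              η * (q t k x a x' * z t k x a x' - q (t+1) k x a x' * z t k x a x'))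
          ≤ ∑ k ∈ Finset.range M.L, ∑ x : M.X k, ∑ a : M.A, ∑ x' : M.X (k+1),
              ((q (t+1) k x a x' * Real.log (q (t+1) k x a x' / q t k x a x')
                  - q (t+1) k x a x' + q t k x a x')
                + ((η * F) ^ 2 / 2 * q (t+1) k x a x' + (η * F) ^ 2 / 2 * q t k x a x')) := by
            refine Finset.sum_le_sum fun k hk => Finset.sum_le_sum fun x _ =>
              Finset.sum_le_sum fun a _ => Finset.sum_le_sum fun x' _ => ?_
            have hkL := Finset.mem_range.1 hk
            have hap := hApos k hkL x a x'
            have hbp := hBpos k hkL x a x'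
            have hzb := hz t ht k hkL x a x'
            have h1 : η * (q t k x a x' * z t k x a x' - q (t+1) k x a x' * z t k x a x')
                ≤ (η * F) * |q (t+1) k x a x' - q t k x a x'| := by
              have h2 : (q t k x a x' - q (t+1) k x a x') * z t k x a x'
                  ≤ |q (t+1) k x a x' - q t k x a x'| * F := by
                calc (q t k x a x' - q (t+1) k x a x') * z t k x a x'
                    ≤ |(q t k x a x' - q (t+1) k x a x') * z t k x a x'| := le_abs_self _
                  _ = |q t k x a x' - q (t+1) k x a x'| * |z t k x a x'| := abs_mul _ _
                  _ ≤ |q (t+1) k x a x' - q t k x a x'| * F := by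
                      rw [abs_sub_comm]
                      exact mul_le_mul_of_nonneg_left hzb (abs_nonneg _)
              calc η * (q t k x a x' * z t k x a x' - q (t+1) k x a x' * z t k x a x')
                  = η * ((q t k x a x' - q (t+1) k x a x') * z t k x a x') := by ring
                _ ≤ η * (|q (t+1) k x a x' - q t k x a x'| * F) :=
                    mul_le_mul_of_nonneg_left h2 hηpos.le
                _ = (η * F) * |q (t+1) k x a x' - q t k x a x'| := by ring
            have h3 := scalar_key (q (t+1) k x a x') (q t k x a x') (η * F) hap.le hbp
              (by positivity)
            calc η * (q t k x a x' * z t k x a x' - q (t+1) k x a x' * z t k x a x')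
                ≤ (η * F) * |q (t+1) k x a x' - q t k x a x'| := h1
              _ ≤ (q (t+1) k x a x' * Real.log (q (t+1) k x a x' / q t k x a x')
                  - q (t+1) k x a x' + q t k x a x')
                  + (η * F) ^ 2 * (q (t+1) k x a x' + q t k x a x') / 2 := h3
              _ = (q (t+1) k x a x' * Real.log (q (t+1) k x a x' / q t k x a x')
                  - q (t+1) k x a x' + q t k x a x')
                  + ((η * F) ^ 2 / 2 * q (t+1) k x a x' + (η * F) ^ 2 / 2 * q t k x a x') := by
                  ring
        _ = M.kl (q (t+1)) (q t)
            + (∑ k ∈ Finset.range M.L, ∑ x : M.X k, ∑ a : M.A, ∑ x' : M.X (k+1),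
              ((η * F) ^ 2 / 2 * q (t+1) k x a x' + (η * F) ^ 2 / 2 * q t k x a x')) := by
            simp only [Finset.sum_add_distrib, LoopFreeMDP.kl]
        _ = M.kl (q (t+1)) (q t) + η ^ 2 * F ^ 2 * Lc := by rw [hmass2]
    linarith
  have hklTnonneg : 0 ≤ M.kl qq (q T) := by
    unfold LoopFreeMDP.kl
    apply Finset.sum_nonneg; intro k hk
    apply Finset.sum_nonneg; intro x _
    apply Finset.sum_nonneg; intro a _
    apply Finset.sum_nonneg; intro x' _
    exact klterm_nonneg _ _ (hqq0 k (Finset.mem_range.1 hk) x a x').1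
      (hqpos T le_rfl k (Finset.mem_range.1 hk) x a x')
  have hsum : η * ∑ t ∈ Finset.range T, (M.ip (q t) (z t) - M.ip qq (z t))
      ≤ M.kl qq (q 0) + (T:ℝ) * (η ^ 2 * F ^ 2 * Lc) := by
    rw [Finset.mul_sum]
    calc ∑ t ∈ Finset.range T, η * (M.ip (q t) (z t) - M.ip qq (z t))
        ≤ ∑ t ∈ Finset.range T, (M.kl qq (q t) - M.kl qq (q (t+1)) + η ^ 2 * F ^ 2 * Lc) :=
          Finset.sum_le_sum fun t htm => hmain t (Finset.mem_range.1 htm)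
      _ = (M.kl qq (q 0) - M.kl qq (q T)) + (T:ℝ) * (η ^ 2 * F ^ 2 * Lc) := by
          rw [Finset.sum_add_distrib, Finset.sum_range_sub' (fun t => M.kl qq (q t)),
            Finset.sum_const, Finset.card_range, nsmul_eq_mul]
      _ ≤ M.kl qq (q 0) + (T:ℝ) * (η ^ 2 * F ^ 2 * Lc) := by linarith
  have hklinit : M.kl qq (q 0) ≤ Lc * R := by
    have hterm : ∀ k, k < M.L →
        (∑ x : M.X k, ∑ a : M.A, ∑ x' : M.X (k+1),
          (qq k x a x' * Real.log (qq k x a x' / q 0 k x a x') - qq k x a x' + q 0 k x a x'))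
        ≤ Real.log ((Fintype.card (M.X k) : ℝ) * Ac * (Fintype.card (M.X (k+1)) : ℝ)) := by
      intro k hk
      have hNk := hcard k hk.le
      have hNk1 := hcard (k+1) hk
      have hcpos : 0 < (Fintype.card (M.X k) : ℝ) * Ac * (Fintype.card (M.X (k+1)) : ℝ) :=
        mul_pos (mul_pos hNk hAcard) hNk1
      have hstep : ∀ (x : M.X k) (a : M.A) (x' : M.X (k+1)),
          qq k x a x' * Real.log (qq k x a x' / q 0 k x a x') - qq k x a x' + q 0 k x a x'
          ≤ qq k x a x'
              * (Real.log ((Fintype.card (M.X k) : ℝ) * Ac * (Fintype.card (M.X (k+1)) : ℝ)) - 1)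
            + 1 / ((Fintype.card (M.X k) : ℝ) * Ac * (Fintype.card (M.X (k+1)) : ℝ)) := by
        intro x a x'
        rw [hq1 k hk]
        obtain ⟨hp0, hp1⟩ := hqq0 k hk x a x'
        have hmain : qq k x a x'
            * Real.log (qq k x a x'
                / (1 / ((Fintype.card (M.X k) : ℝ) * Ac * (Fintype.card (M.X (k+1)) : ℝ))))
            ≤ qq k x a x'
              * Real.log ((Fintype.card (M.X k) : ℝ) * Ac * (Fintype.card (M.X (k+1)) : ℝ)) := by
          rcases eq_or_lt_of_le hp0 with h0 | hp'
          · rw [← h0]; simp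
          · have hdiv : qq k x a x'
                / (1 / ((Fintype.card (M.X k) : ℝ) * Ac * (Fintype.card (M.X (k+1)) : ℝ)))
                = qq k x a x' * ((Fintype.card (M.X k) : ℝ) * Ac * (Fintype.card (M.X (k+1)) : ℝ)) := by
              field_simp
            rw [hdiv, Real.log_mul (ne_of_gt hp') (ne_of_gt hcpos)]
            have hlp : qq k x a x' * Real.log (qq k x a x') ≤ 0 :=
              mul_nonpos_of_nonneg_of_nonpos hp0 (Real.log_nonpos hp0 hp1)
            nlinarith
        linarith
      calc (∑ x : M.X k, ∑ a : M.A, ∑ x' : M.X (k+1),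
            (qq k x a x' * Real.log (qq k x a x' / q 0 k x a x') - qq k x a x' + q 0 k x a x'))
          ≤ ∑ x : M.X k, ∑ a : M.A, ∑ x' : M.X (k+1),
            (qq k x a x'
              * (Real.log ((Fintype.card (M.X k) : ℝ) * Ac * (Fintype.card (M.X (k+1)) : ℝ)) - 1)
            + 1 / ((Fintype.card (M.X k) : ℝ) * Ac * (Fintype.card (M.X (k+1)) : ℝ))) :=
            Finset.sum_le_sum fun x _ => Finset.sum_le_sum fun a _ =>
              Finset.sum_le_sum fun x' _ => hstep x a x'
        _ = Real.log ((Fintype.card (M.X k) : ℝ) * Ac * (Fintype.card (M.X (k+1)) : ℝ)) := by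
            simp only [Finset.sum_add_distrib, ← Finset.sum_mul, Finset.sum_const,
              Finset.card_univ, nsmul_eq_mul]
            rw [hqqmass k hk]
            field_simp
            rw [hAc]; ring
    have hkl0 : M.kl qq (q 0) ≤ ∑ k ∈ Finset.range M.L,
        Real.log ((Fintype.card (M.X k) : ℝ) * Ac * (Fintype.card (M.X (k+1)) : ℝ)) := by
      unfold LoopFreeMDP.kl
      exact Finset.sum_le_sum fun k hk => hterm k (Finset.mem_range.1 hk)
    refine le_trans hkl0 ?_
    have heqX : Xc = ∑ k ∈ Finset.range (M.L+1), (Fintype.card (M.X k) : ℝ) := by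
      rw [hXc]; unfold LoopFreeMDP.cardX; push_cast; rfl
    have hXsum : ∑ k ∈ Finset.range M.L, (Fintype.card (M.X k) : ℝ) ≤ Xc := by
      rw [heqX]
      exact Finset.sum_le_sum_of_subset_of_nonneg (Finset.range_subset_range.2 (by omega))
        (fun i _ _ => by positivity)
    have hXsum' : ∑ k ∈ Finset.range M.L, (Fintype.card (M.X (k+1)) : ℝ) ≤ Xc := by
      have h9 : ∑ k ∈ Finset.range (M.L+1), (Fintype.card (M.X k) : ℝ)
          = (∑ k ∈ Finset.range M.L, (Fintype.card (M.X (k+1)) : ℝ))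
            + (Fintype.card (M.X 0) : ℝ) := Finset.sum_range_succ' _ _
      have h10 : (0:ℝ) ≤ (Fintype.card (M.X 0) : ℝ) := by positivity
      rw [heqX, h9]
      linarith
    have hlog1 : ∀ N : ℝ, 0 < N → Real.log N ≤ Real.log (Xc/Lc) + (Lc/Xc * N - 1) := by
      intro N hN
      have h5 := Real.log_le_sub_one_of_pos (show 0 < Lc/Xc * N by positivity)
      have h6 : Real.log (Lc/Xc * N) = Real.log Lc - Real.log Xc + Real.log N := by
        rw [Real.log_mul (by positivity) (ne_of_gt hN),
          Real.log_div (ne_of_gt hLpos) (ne_of_gt hXpos)]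
      have h7 : Real.log (Xc/Lc) = Real.log Xc - Real.log Lc :=
        Real.log_div (ne_of_gt hXpos) (ne_of_gt hLpos)
      linarith
    have hLXL : Lc/Xc * Xc = Lc := by field_simp
    have hA1 : ∑ k ∈ Finset.range M.L, Real.log (Fintype.card (M.X k) : ℝ)
        ≤ Lc * Real.log (Xc/Lc) := by
      calc ∑ k ∈ Finset.range M.L, Real.log (Fintype.card (M.X k) : ℝ)
          ≤ ∑ k ∈ Finset.range M.L,
              (Real.log (Xc/Lc) + (Lc/Xc * (Fintype.card (M.X k) : ℝ) - 1)) :=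
            Finset.sum_le_sum fun k hk =>
              hlog1 _ (hcard k (Nat.le_of_lt (Finset.mem_range.1 hk)))
        _ = (M.L : ℝ) * Real.log (Xc/Lc)
            + (Lc/Xc * (∑ k ∈ Finset.range M.L, (Fintype.card (M.X k) : ℝ)) - (M.L:ℝ)) := by
            rw [Finset.sum_add_distrib, Finset.sum_sub_distrib, Finset.sum_const,
              Finset.sum_const, Finset.card_range, ← Finset.mul_sum]
            push_cast
            ring
        _ ≤ Lc * Real.log (Xc/Lc) := by
            have h11 : Lc/Xc * (∑ k ∈ Finset.range M.L, (Fintype.card (M.X k) : ℝ))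
                ≤ Lc/Xc * Xc := mul_le_mul_of_nonneg_left hXsum (by positivity)
            rw [hLc]
            linarith [hLXL]
    have hA2 : ∑ k ∈ Finset.range M.L, Real.log (Fintype.card (M.X (k+1)) : ℝ)
        ≤ Lc * Real.log (Xc/Lc) := by
      calc ∑ k ∈ Finset.range M.L, Real.log (Fintype.card (M.X (k+1)) : ℝ)
          ≤ ∑ k ∈ Finset.range M.L,
              (Real.log (Xc/Lc) + (Lc/Xc * (Fintype.card (M.X (k+1)) : ℝ) - 1)) :=
            Finset.sum_le_sum fun k hk => hlog1 _ (hcard (k+1) (Finset.mem_range.1 hk))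
        _ = (M.L : ℝ) * Real.log (Xc/Lc)
            + (Lc/Xc * (∑ k ∈ Finset.range M.L, (Fintype.card (M.X (k+1)) : ℝ)) - (M.L:ℝ)) := by
            rw [Finset.sum_add_distrib, Finset.sum_sub_distrib, Finset.sum_const,
              Finset.sum_const, Finset.card_range, ← Finset.mul_sum]
            push_cast
            ring
        _ ≤ Lc * Real.log (Xc/Lc) := by
            have h11 : Lc/Xc * (∑ k ∈ Finset.range M.L, (Fintype.card (M.X (k+1)) : ℝ))
                ≤ Lc/Xc * Xc := mul_le_mul_of_nonneg_left hXsum' (by positivity)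
            rw [hLc]
            linarith [hLXL]
    have hRdec : R = 2 * Real.log (Xc/Lc) + Real.log Ac := by
      rw [hR, Real.log_div (by positivity) (by positivity),
        Real.log_mul (by positivity) (ne_of_gt hAcard), Real.log_pow, Real.log_pow,
        Real.log_div (ne_of_gt hXpos) (ne_of_gt hLpos)]
      push_cast
      ring
    calc ∑ k ∈ Finset.range M.L,
          Real.log ((Fintype.card (M.X k) : ℝ) * Ac * (Fintype.card (M.X (k+1)) : ℝ))
        = ∑ k ∈ Finset.range M.L,
            (Real.log (Fintype.card (M.X k) : ℝ) + Real.log Ac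
              + Real.log (Fintype.card (M.X (k+1)) : ℝ)) := by
          refine Finset.sum_congr rfl fun k hk => ?_
          have h12 := hcard k (Nat.le_of_lt (Finset.mem_range.1 hk))
          have h13 := hcard (k+1) (Finset.mem_range.1 hk)
          rw [Real.log_mul (by positivity) (ne_of_gt h13),
            Real.log_mul (ne_of_gt h12) (ne_of_gt hAcard)]
      _ = (∑ k ∈ Finset.range M.L, Real.log (Fintype.card (M.X k) : ℝ))
          + (M.L:ℝ) * Real.log Ac
          + ∑ k ∈ Finset.range M.L, Real.log (Fintype.card (M.X (k+1)) : ℝ) := by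
          rw [Finset.sum_add_distrib, Finset.sum_add_distrib, Finset.sum_const,
            Finset.card_range, nsmul_eq_mul]
      _ ≤ Lc * Real.log (Xc/Lc) + (M.L:ℝ) * Real.log Ac + Lc * Real.log (Xc/Lc) := by
          linarith [hA1, hA2]
      _ = Lc * R := by
          rw [hRdec, hLc]
          ring
  have hF0 : (F:ℝ) ≠ 0 := ne_of_gt hF
  have hTne : (T:ℝ) ≠ 0 := by linarith
  have hTe : (T:ℝ) * (η ^ 2 * F ^ 2 * Lc) = Lc * R := by
    rw [hη2]; field_simp
  have hgoal : ∑ t ∈ Finset.range T, M.ip (fun k x a x' => q t k x a x' - qq k x a x') (z t)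
      = ∑ t ∈ Finset.range T, (M.ip (q t) (z t) - M.ip qq (z t)) :=
    Finset.sum_congr rfl fun t _ => ip_sub M (q t) qq (z t)
  rw [hgoal]
  have h1 : ∑ t ∈ Finset.range T, (M.ip (q t) (z t) - M.ip qq (z t)) ≤ 2 * Lc * R / η := by
    rw [le_div_iff₀ hηpos]
    nlinarith [hsum, hklinit, hTe]
  refine le_trans h1 ?_
  have hRη : R / η = Real.sqrt (F ^ 2 * T * R) := by
    have hsq : (R / η) ^ 2 = F ^ 2 * T * R := by
      rw [div_pow, hη2]
      have hRne : R ≠ 0 := ne_of_gt hRpos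
      field_simp
    rw [← hsq, Real.sqrt_sq (div_nonneg hRpos.le hηpos.le)]
  calc 2 * Lc * R / η = 2 * Lc * (R / η) := by ring
    _ = 2 * Lc * Real.sqrt (F ^ 2 * T * R) := by rw [hRη]
    _ ≤ 2 * Lc * (F * Real.sqrt (2 * T * S)) := by
        have ha : Real.sqrt (F ^ 2 * T * R) ≤ Real.sqrt (F ^ 2 * (2 * T * S)) := by
          apply Real.sqrt_le_sqrt
          have h4 : 0 ≤ F ^ 2 * T * (2 * S - R) :=
            mul_nonneg (by positivity) (by linarith)
          nlinarith [h4]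
        have hb : Real.sqrt (F ^ 2 * (2 * T * S)) = F * Real.sqrt (2 * T * S) := by
          rw [Real.sqrt_mul (sq_nonneg F), Real.sqrt_sq hF.le]
        rw [← hb]
        exact mul_le_mul_of_nonneg_left ha (by positivity)
    _ = 2 * F * Lc * Real.sqrt (2 * T * S) := by ring
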